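/- Let G be a group, G' ≤ G a subgroup, and N a group equipped with a left G-action by group automorphisms. Suppose N acts on the right on the left coset space G/G' (so (xG')·1 = xG' and ((xG')·n)·m = (xG')·(nm)) such that g·((hG')·n) = (ghG')·(g·n) for all g, h ∈ G and n ∈ N, where G acts on G/G' by left translation, and suppose the orbit map β : N → G/G', n ↦ (1G')·n, is bijective. Let V ≤ N be a G-stable subgroup (g·V = V for all g ∈ G) and define U := {u ∈ G | uG' ∈ β(V)}. Then U is a subgroup of G containing G'. -/
import Mathlib


/-- Let `G'` be a subgroup of `G` and let `N` be a group with a left `G`-action by group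
automorphisms acting on the right on `G ⧸ G'` compatibly with left translation, with
bijective orbit map `β : n ↦ (1G')·n`. If `V ≤ N` is `G`-stable, then
`U = {u | uG' ∈ β(V)}` is a subgroup of `G` containing `G'`. -/
theorem exists_subgroup_of_stable (G : Type) [Group G] (G' : Subgroup G)
    (N : Type) [Group N] [MulDistribMulAction G N]
    (act : G ⧸ G' → N → G ⧸ G')
    (h_one : ∀ x : G ⧸ G', act x 1 = x)
    (h_mul : ∀ (x : G ⧸ G') (n m : N), act (act x n) m = act x (n * m))
    (h_compat : ∀ (g h : G) (n : N), g • act (↑h) n = act (↑(g * h)) (g • n))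
    (hβ : Function.Bijective fun n : N => act ((1 : G) : G ⧸ G') n)
    (V : Subgroup N) (hV : ∀ g : G, ∀ v ∈ V, g • v ∈ V) :
    ∃ U : Subgroup G,
      (U : Set G) =
        {u : G | (↑u : G ⧸ G') ∈ (fun n : N => act ((1 : G) : G ⧸ G') n) '' (V : Set N)} ∧
      G' ≤ U := by
  have smul_mk : ∀ g h : G, g • ((h : G ⧸ G')) = ((g * h : G) : G ⧸ G') := fun g h => rfl
  refine ⟨{
    carrier := {u : G | (↑u : G ⧸ G') ∈ (fun n : N => act ((1 : G) : G ⧸ G') n) '' (V : Set N)}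
    one_mem' := ⟨1, V.one_mem, (h_one _).trans rfl⟩
    mul_mem' := ?_
    inv_mem' := ?_ }, rfl, ?_⟩
  · rintro u w ⟨v, hv, huv⟩ ⟨v', hv', hwv⟩
    refine ⟨v * u • v', V.mul_mem hv (hV u v' hv'), ?_⟩
    simp only at huv hwv ⊢
    rw [← h_mul]
    rw [huv]
    calc act (↑u) (u • v') = u • act (↑(1:G)) v' := by rw [h_compat, mul_one]
    _ = u • (↑w : G ⧸ G') := by rw [hwv]
    _ = ↑(u * w) := smul_mk u w
  · rintro u ⟨v, hv, huv⟩
    refine ⟨(u⁻¹ • v)⁻¹, V.inv_mem (hV u⁻¹ v hv), ?_⟩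
    simp only at huv ⊢
    have h1 : act ((u⁻¹ : G) : G ⧸ G') (u⁻¹ • v) = ((1 : G) : G ⧸ G') := by
      have := h_compat u⁻¹ 1 v
      rw [mul_one, huv, smul_mk] at this
      rw [← this, inv_mul_cancel]
    have := h_mul ((u⁻¹ : G) : G ⧸ G') (u⁻¹ • v) (u⁻¹ • v)⁻¹
    rw [mul_inv_cancel, h_one, h1] at this
    exact this
  · intro g hg
    refine ⟨1, V.one_mem, ?_⟩
    simp only [h_one]
    exact QuotientGroup.eq.mpr (by simpa using hg)
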